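/- The function φ₁₀(p,q) = (p³ − 3p)/(1 + p²)³·q⁴ + (3/2)·(p⁵ − 2p³ − 3p)/(1 + p²)³·q² − (3/2)·p/(1 + p²) satisfies the equation (1 + p²)φ_pp + 2pq·φ_pq + (1 + q²)φ_qq = 0 for all real p, q. -/

import Mathlib

set_option maxHeartbeats 1000000


noncomputable def pd₁ (f : ℝ → ℝ → ℝ) : ℝ → ℝ → ℝ := fun p q => deriv (fun x => f x q) p
noncomputable def pd₂ (f : ℝ → ℝ → ℝ) : ℝ → ℝ → ℝ := fun p q => deriv (fun y => f p y) q

private lemma hpoly7 (c0 c1 c2 c3 c4 c5 c6 c7 x : ℝ) :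
    HasDerivAt (fun t : ℝ => c0 + c1 * t ^ 1 + c2 * t ^ 2 + c3 * t ^ 3 + c4 * t ^ 4
      + c5 * t ^ 5 + c6 * t ^ 6 + c7 * t ^ 7)
    (c1 + 2 * c2 * x ^ 1 + 3 * c3 * x ^ 2 + 4 * c4 * x ^ 3 + 5 * c5 * x ^ 4
      + 6 * c6 * x ^ 5 + 7 * c7 * x ^ 6) x := by
  have h : ∀ n : ℕ, ∀ c : ℝ,
      HasDerivAt (fun t : ℝ => c * t ^ n) (c * (n * x ^ (n - 1))) x := fun n c =>
    (hasDerivAt_pow n x).const_mul c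
  have h0 := (((((((hasDerivAt_const x c0).add (h 1 c1)).add (h 2 c2)).add (h 3 c3)).add
    (h 4 c4)).add (h 5 c5)).add (h 6 c6)).add (h 7 c7)
  convert h0 using 1
  all_goals first | rfl | (push_cast; ring)

private lemma hden (k : ℕ) (x : ℝ) :
    HasDerivAt (fun t : ℝ => (1 + t ^ 2) ^ k) ((k : ℝ) * (1 + x ^ 2) ^ (k - 1) * (2 * x)) x := by
  have h : HasDerivAt (fun t : ℝ => 1 + t ^ 2) (2 * x) x := by
    exact ((hasDerivAt_pow 2 x).const_add (1 : ℝ)).congr_deriv (by norm_num)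
  exact h.pow k

private lemma une (x : ℝ) (k : ℕ) : (1 + x ^ 2) ^ k ≠ 0 := by positivity

/-- first derivative in `a` of φ -/
private lemma d1 (q x : ℝ) :
    HasDerivAt (fun a : ℝ => (a ^ 3 - 3 * a) / (1 + a ^ 2) ^ 3 * q ^ 4
        + (3 / 2) * ((a ^ 5 - 2 * a ^ 3 - 3 * a) / (1 + a ^ 2) ^ 3) * q ^ 2
        - (3 / 2) * (a / (1 + a ^ 2)))
      (((-3) * x ^ 4 + 18 * x ^ 2 - 3) / (1 + x ^ 2) ^ 4 * q ^ 4
        + (3 / 2) * ((-x ^ 6 + 11 * x ^ 4 + 9 * x ^ 2 - 3) / (1 + x ^ 2) ^ 4) * q ^ 2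
        - (3 / 2) * ((1 - x ^ 2) / (1 + x ^ 2) ^ 2)) x := by
  have hfun : (fun a : ℝ => (a ^ 3 - 3 * a) / (1 + a ^ 2) ^ 3 * q ^ 4
        + (3 / 2) * ((a ^ 5 - 2 * a ^ 3 - 3 * a) / (1 + a ^ 2) ^ 3) * q ^ 2
        - (3 / 2) * (a / (1 + a ^ 2)))
      = fun a : ℝ => (0 + (-3 * q ^ 4 - 9 / 2 * q ^ 2 - 3 / 2) * a ^ 1 + 0 * a ^ 2
        + (q ^ 4 - 3 * q ^ 2 - 3) * a ^ 3 + 0 * a ^ 4 + (3 / 2 * q ^ 2 - 3 / 2) * a ^ 5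
        + 0 * a ^ 6 + 0 * a ^ 7) / (1 + a ^ 2) ^ 3 := by
    funext a
    have h1 : (1 + a ^ 2) ≠ 0 := by positivity
    field_simp
    ring
  rw [hfun]
  have h := (hpoly7 0 (-3 * q ^ 4 - 9 / 2 * q ^ 2 - 3 / 2) 0 (q ^ 4 - 3 * q ^ 2 - 3) 0
    (3 / 2 * q ^ 2 - 3 / 2) 0 0 x).div (hden 3 x) (une x 3)
  convert h using 1
  all_goals try rfl
  have h1 : (1 + x ^ 2) ≠ 0 := by positivity
  push_cast
  field_simp
  ring

/-- second derivative in `a` : derivative of the function appearing in `d1` -/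
private lemma d11 (q x : ℝ) :
    HasDerivAt (fun a : ℝ => ((-3) * a ^ 4 + 18 * a ^ 2 - 3) / (1 + a ^ 2) ^ 4 * q ^ 4
        + (3 / 2) * ((-a ^ 6 + 11 * a ^ 4 + 9 * a ^ 2 - 3) / (1 + a ^ 2) ^ 4) * q ^ 2
        - (3 / 2) * ((1 - a ^ 2) / (1 + a ^ 2) ^ 2))
      (((12 * x ^ 5 - 120 * x ^ 3 + 60 * x) * q ^ 4
        + (3 / 2) * (2 * x ^ 7 - 50 * x ^ 5 - 10 * x ^ 3 + 42 * x) * q ^ 2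
        - (3 / 2) * (2 * x ^ 3 - 6 * x) * (1 + x ^ 2) ^ 2) / (1 + x ^ 2) ^ 5) x := by
  have hfun : (fun a : ℝ => ((-3) * a ^ 4 + 18 * a ^ 2 - 3) / (1 + a ^ 2) ^ 4 * q ^ 4
        + (3 / 2) * ((-a ^ 6 + 11 * a ^ 4 + 9 * a ^ 2 - 3) / (1 + a ^ 2) ^ 4) * q ^ 2
        - (3 / 2) * ((1 - a ^ 2) / (1 + a ^ 2) ^ 2))
      = fun a : ℝ => ((-3 * q ^ 4 - 9 / 2 * q ^ 2 - 3 / 2) + 0 * a ^ 1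
        + (18 * q ^ 4 + 27 / 2 * q ^ 2 - 3 / 2) * a ^ 2 + 0 * a ^ 3
        + (-3 * q ^ 4 + 33 / 2 * q ^ 2 + 3 / 2) * a ^ 4 + 0 * a ^ 5
        + (-3 / 2 * q ^ 2 + 3 / 2) * a ^ 6 + 0 * a ^ 7) / (1 + a ^ 2) ^ 4 := by
    funext a
    have h1 : (1 + a ^ 2) ≠ 0 := by positivity
    field_simp
    ring
  rw [hfun]
  have h := (hpoly7 (-3 * q ^ 4 - 9 / 2 * q ^ 2 - 3 / 2) 0 (18 * q ^ 4 + 27 / 2 * q ^ 2 - 3 / 2) 0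
    (-3 * q ^ 4 + 33 / 2 * q ^ 2 + 3 / 2) 0 (-3 / 2 * q ^ 2 + 3 / 2) 0 x).div (hden 4 x) (une x 4)
  convert h using 1
  all_goals try rfl
  have h1 : (1 + x ^ 2) ≠ 0 := by positivity
  push_cast
  field_simp
  ring

/-- first derivative in `b` of φ -/
private lemma d2 (a y : ℝ) :
    HasDerivAt (fun b : ℝ => (a ^ 3 - 3 * a) / (1 + a ^ 2) ^ 3 * b ^ 4
        + (3 / 2) * ((a ^ 5 - 2 * a ^ 3 - 3 * a) / (1 + a ^ 2) ^ 3) * b ^ 2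
        - (3 / 2) * (a / (1 + a ^ 2)))
      (4 * ((a ^ 3 - 3 * a) / (1 + a ^ 2) ^ 3) * y ^ 3
        + 3 * ((a ^ 5 - 2 * a ^ 3 - 3 * a) / (1 + a ^ 2) ^ 3) * y) y := by
  have hfun : (fun b : ℝ => (a ^ 3 - 3 * a) / (1 + a ^ 2) ^ 3 * b ^ 4
        + (3 / 2) * ((a ^ 5 - 2 * a ^ 3 - 3 * a) / (1 + a ^ 2) ^ 3) * b ^ 2
        - (3 / 2) * (a / (1 + a ^ 2)))
      = fun b : ℝ => (-(3 / 2) * (a / (1 + a ^ 2))) + 0 * b ^ 1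
        + (3 / 2 * ((a ^ 5 - 2 * a ^ 3 - 3 * a) / (1 + a ^ 2) ^ 3)) * b ^ 2 + 0 * b ^ 3
        + ((a ^ 3 - 3 * a) / (1 + a ^ 2) ^ 3) * b ^ 4 + 0 * b ^ 5 + 0 * b ^ 6 + 0 * b ^ 7 := by
    funext b; ring
  rw [hfun]
  convert hpoly7 (-(3 / 2) * (a / (1 + a ^ 2))) 0
    (3 / 2 * ((a ^ 5 - 2 * a ^ 3 - 3 * a) / (1 + a ^ 2) ^ 3)) 0
    ((a ^ 3 - 3 * a) / (1 + a ^ 2) ^ 3) 0 0 0 y using 1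
  ring

/-- derivative in `a` of φ_b -/
private lemma d12 (q x : ℝ) :
    HasDerivAt (fun a : ℝ => 4 * ((a ^ 3 - 3 * a) / (1 + a ^ 2) ^ 3) * q ^ 3
        + 3 * ((a ^ 5 - 2 * a ^ 3 - 3 * a) / (1 + a ^ 2) ^ 3) * q)
      ((4 * ((-3) * x ^ 4 + 18 * x ^ 2 - 3) * q ^ 3
        + 3 * (-x ^ 6 + 11 * x ^ 4 + 9 * x ^ 2 - 3) * q) / (1 + x ^ 2) ^ 4) x := by
  have hfun : (fun a : ℝ => 4 * ((a ^ 3 - 3 * a) / (1 + a ^ 2) ^ 3) * q ^ 3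
        + 3 * ((a ^ 5 - 2 * a ^ 3 - 3 * a) / (1 + a ^ 2) ^ 3) * q)
      = fun a : ℝ => (0 + (-12 * q ^ 3 - 9 * q) * a ^ 1 + 0 * a ^ 2
        + (4 * q ^ 3 - 6 * q) * a ^ 3 + 0 * a ^ 4 + (3 * q) * a ^ 5
        + 0 * a ^ 6 + 0 * a ^ 7) / (1 + a ^ 2) ^ 3 := by
    funext a
    have h1 : (1 + a ^ 2) ≠ 0 := by positivity
    field_simp
    ring
  rw [hfun]
  have h := (hpoly7 0 (-12 * q ^ 3 - 9 * q) 0 (4 * q ^ 3 - 6 * q) 0 (3 * q) 0 0 x).div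
    (hden 3 x) (une x 3)
  convert h using 1
  all_goals try rfl
  have h1 : (1 + x ^ 2) ≠ 0 := by positivity
  push_cast
  field_simp
  ring

/-- derivative in `b` of φ_b -/
private lemma d22 (a y : ℝ) :
    HasDerivAt (fun b : ℝ => 4 * ((a ^ 3 - 3 * a) / (1 + a ^ 2) ^ 3) * b ^ 3
        + 3 * ((a ^ 5 - 2 * a ^ 3 - 3 * a) / (1 + a ^ 2) ^ 3) * b)
      (12 * ((a ^ 3 - 3 * a) / (1 + a ^ 2) ^ 3) * y ^ 2
        + 3 * ((a ^ 5 - 2 * a ^ 3 - 3 * a) / (1 + a ^ 2) ^ 3)) y := by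
  have hfun : (fun b : ℝ => 4 * ((a ^ 3 - 3 * a) / (1 + a ^ 2) ^ 3) * b ^ 3
        + 3 * ((a ^ 5 - 2 * a ^ 3 - 3 * a) / (1 + a ^ 2) ^ 3) * b)
      = fun b : ℝ => 0 + (3 * ((a ^ 5 - 2 * a ^ 3 - 3 * a) / (1 + a ^ 2) ^ 3)) * b ^ 1
        + 0 * b ^ 2 + (4 * ((a ^ 3 - 3 * a) / (1 + a ^ 2) ^ 3)) * b ^ 3 + 0 * b ^ 4
        + 0 * b ^ 5 + 0 * b ^ 6 + 0 * b ^ 7 := by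
    funext b; ring
  rw [hfun]
  convert hpoly7 0 (3 * ((a ^ 5 - 2 * a ^ 3 - 3 * a) / (1 + a ^ 2) ^ 3)) 0
    (4 * ((a ^ 3 - 3 * a) / (1 + a ^ 2) ^ 3)) 0 0 0 0 y using 1
  ring

theorem phi_solves_legendre_eq :
    ∀ p q : ℝ,
      (1 + p ^ 2) * pd₁ (pd₁ (fun a b => (a ^ 3 - 3 * a) / (1 + a ^ 2) ^ 3 * b ^ 4 + (3 / 2) * ((a ^ 5 - 2 * a ^ 3 - 3 * a) / (1 + a ^ 2) ^ 3) * b ^ 2 - (3 / 2) * (a / (1 + a ^ 2)))) p q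
        + 2 * p * q * pd₁ (pd₂ (fun a b => (a ^ 3 - 3 * a) / (1 + a ^ 2) ^ 3 * b ^ 4 + (3 / 2) * ((a ^ 5 - 2 * a ^ 3 - 3 * a) / (1 + a ^ 2) ^ 3) * b ^ 2 - (3 / 2) * (a / (1 + a ^ 2)))) p q
        + (1 + q ^ 2) * pd₂ (pd₂ (fun a b => (a ^ 3 - 3 * a) / (1 + a ^ 2) ^ 3 * b ^ 4 + (3 / 2) * ((a ^ 5 - 2 * a ^ 3 - 3 * a) / (1 + a ^ 2) ^ 3) * b ^ 2 - (3 / 2) * (a / (1 + a ^ 2)))) p q = 0 := by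
  intro p q
  set f : ℝ → ℝ → ℝ := fun a b => (a ^ 3 - 3 * a) / (1 + a ^ 2) ^ 3 * b ^ 4
    + (3 / 2) * ((a ^ 5 - 2 * a ^ 3 - 3 * a) / (1 + a ^ 2) ^ 3) * b ^ 2
    - (3 / 2) * (a / (1 + a ^ 2)) with hf
  -- first partials as closed forms
  have e1 : pd₁ f = fun x q => ((-3) * x ^ 4 + 18 * x ^ 2 - 3) / (1 + x ^ 2) ^ 4 * q ^ 4
      + (3 / 2) * ((-x ^ 6 + 11 * x ^ 4 + 9 * x ^ 2 - 3) / (1 + x ^ 2) ^ 4) * q ^ 2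
      - (3 / 2) * ((1 - x ^ 2) / (1 + x ^ 2) ^ 2) := by
    funext x y
    exact (d1 y x).deriv
  have e2 : pd₂ f = fun a y => 4 * ((a ^ 3 - 3 * a) / (1 + a ^ 2) ^ 3) * y ^ 3
      + 3 * ((a ^ 5 - 2 * a ^ 3 - 3 * a) / (1 + a ^ 2) ^ 3) * y := by
    funext a y
    exact (d2 a y).deriv
  have h11 : pd₁ (pd₁ f) p q = ((12 * p ^ 5 - 120 * p ^ 3 + 60 * p) * q ^ 4
      + (3 / 2) * (2 * p ^ 7 - 50 * p ^ 5 - 10 * p ^ 3 + 42 * p) * q ^ 2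
      - (3 / 2) * (2 * p ^ 3 - 6 * p) * (1 + p ^ 2) ^ 2) / (1 + p ^ 2) ^ 5 := by
    rw [e1]; exact (d11 q p).deriv
  have h12 : pd₁ (pd₂ f) p q = (4 * ((-3) * p ^ 4 + 18 * p ^ 2 - 3) * q ^ 3
      + 3 * (-p ^ 6 + 11 * p ^ 4 + 9 * p ^ 2 - 3) * q) / (1 + p ^ 2) ^ 4 := by
    rw [e2]; exact (d12 q p).deriv
  have h22 : pd₂ (pd₂ f) p q = 12 * ((p ^ 3 - 3 * p) / (1 + p ^ 2) ^ 3) * q ^ 2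
      + 3 * ((p ^ 5 - 2 * p ^ 3 - 3 * p) / (1 + p ^ 2) ^ 3) := by
    rw [e2]; exact (d22 p q).deriv
  rw [h11, h12, h22]
  have h1 : (1 + p ^ 2) ≠ 0 := by positivity
  field_simp
  ring
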